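/- Let k ≥ 1 and let D be a compact subset of ℝ^k with dim_H(D) > k − 1. Then the monoid M(D) of similarity transformations of D is right cancellative: if a, b, c : D → D are similarity transformations with a ∘ c = b ∘ c, then a = b. -/

import Mathlib

open scoped ENNReal

open Set Module AffineSubspace

/-- The set underlying an affine subspace has Hausdorff dimension at most the rank of its
direction. -/
lemma aux_dimH_affine {k : ℕ} (s : AffineSubspace ℝ (EuclideanSpace ℝ (Fin k)))
    {p : EuclideanSpace ℝ (Fin k)} (hp : p ∈ s) :
    dimH (s : Set (EuclideanSpace ℝ (Fin k))) ≤ (finrank ℝ s.direction : ℝ≥0∞) := by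
  have hiso : Isometry (fun w : s.direction => (w : EuclideanSpace ℝ (Fin k)) + p) := by
    intro w1 w2
    rw [edist_add_right]
    rfl
  have hrange : (s : Set (EuclideanSpace ℝ (Fin k))) = Set.range (fun w : s.direction => (w : EuclideanSpace ℝ (Fin k)) + p) := by
    ext x
    constructor
    · intro hx
      have hmem : x - p ∈ s.direction := by
        rw [← vadd_mem_iff_mem_direction (x - p) hp]
        simpa [vadd_eq_add, sub_add_cancel] using hx
      exact ⟨⟨x - p, hmem⟩, by simp⟩
    · rintro ⟨w, rfl⟩
      have := vadd_mem_iff_mem_of_mem_direction w.2 (p := p)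
      simpa [vadd_eq_add] using this.2 hp
  rw [hrange, ← Set.image_univ, hiso.dimH_image, Real.dimH_univ_eq_finrank]

/-- A set of Hausdorff dimension `> k - 1` in `ℝ^k` is not contained in any perpendicular
bisector, hence separates points by distances. -/
lemma aux_eq_of_dist_eq {k : ℕ} (hk : 1 ≤ k) (S : Set (EuclideanSpace ℝ (Fin k)))
    (hdim : (k : ℝ≥0∞) - 1 < dimH S) {x y : EuclideanSpace ℝ (Fin k)}
    (h : ∀ q ∈ S, dist q x = dist q y) : x = y := by
  by_contra hxy
  have hsub : S ⊆ (perpBisector x y : Set (EuclideanSpace ℝ (Fin k))) := fun q hq =>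
    (AffineSubspace.mem_perpBisector_iff_dist_eq).2 (h q hq)
  haveI : Fact (finrank ℝ (EuclideanSpace ℝ (Fin k)) = (k - 1) + 1) := ⟨by
    rw [finrank_euclideanSpace_fin]; omega⟩
  have hv : y - x ≠ 0 := sub_ne_zero.2 (Ne.symm hxy)
  have hdir : finrank ℝ (perpBisector x y).direction = k - 1 := by
    rw [direction_perpBisector]
    have := Submodule.finrank_orthogonal_span_singleton (𝕜 := ℝ) (E := EuclideanSpace ℝ (Fin k)) (n := k - 1) hv
    simpa [vsub_eq_sub] using this
  have hle : dimH S ≤ ((k - 1 : ℕ) : ℝ≥0∞) := by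
    calc dimH S ≤ dimH (perpBisector x y : Set (EuclideanSpace ℝ (Fin k))) := dimH_mono hsub
    _ ≤ (finrank ℝ (perpBisector x y).direction : ℝ≥0∞) :=
        aux_dimH_affine _ (midpoint_mem_perpBisector x y)
    _ = ((k - 1 : ℕ) : ℝ≥0∞) := by rw [hdir]
  rw [ENNReal.natCast_sub, Nat.cast_one] at hle
  exact absurd (lt_of_lt_of_le hdim hle) (lt_irrefl _)

/-- if `D ⊆ ℝ^k` is compact with Hausdorff dimension `> k - 1`, then the
monoid of similarity transformations of `D` is right cancellative: if `a`, `b`, `c` are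
similarity transformations of `D` with `a ∘ c = b ∘ c`, then `a = b`. -/
theorem stmt16 (k : ℕ) (hk : 1 ≤ k) (D : Set (EuclideanSpace ℝ (Fin k)))
    (hD : IsCompact D) (hdim : (k : ℝ≥0∞) - 1 < dimH D)
    (a b c : D → D)
    (ha : ∃ r : ℝ, 0 < r ∧ r ≤ 1 ∧ ∀ x y : D, dist (a x) (a y) = r * dist x y)
    (hb : ∃ r : ℝ, 0 < r ∧ r ≤ 1 ∧ ∀ x y : D, dist (b x) (b y) = r * dist x y)
    (hc : ∃ r : ℝ, 0 < r ∧ r ≤ 1 ∧ ∀ x y : D, dist (c x) (c y) = r * dist x y)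
    (h : a ∘ c = b ∘ c) : a = b := by
  obtain ⟨ra, hra0, hra1, hra⟩ := ha
  obtain ⟨rb, hrb0, hrb1, hrb⟩ := hb
  obtain ⟨rc, hrc0, hrc1, hrc⟩ := hc
  have hcc : ∀ z : D, a (c z) = b (c z) := fun z => congrFun h z
  -- `D` is not a subsingleton
  have hpos : 0 < dimH D := by
    refine lt_of_le_of_lt (zero_le) hdim
  have hnt : D.Nontrivial := by
    rw [← Set.not_subsingleton_iff]
    intro hs
    rw [dimH_subsingleton hs] at hpos
    exact lt_irrefl _ hpos
  obtain ⟨x0, hx0, y0, hy0, hxy0⟩ := hnt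
  have hd0 : dist (⟨x0, hx0⟩ : D) (⟨y0, hy0⟩ : D) ≠ 0 := by
    simp [Subtype.dist_eq, dist_eq_zero, hxy0]
  -- equal ratios
  have hrab : ra = rb := by
    have h1 := hra (c ⟨x0, hx0⟩) (c ⟨y0, hy0⟩)
    have h2 := hrb (c ⟨x0, hx0⟩) (c ⟨y0, hy0⟩)
    rw [hcc, hcc] at h1
    rw [h1, hrc] at h2
    have hrcd : rc * dist (⟨x0, hx0⟩ : D) (⟨y0, hy0⟩ : D) ≠ 0 :=
      mul_ne_zero (ne_of_gt hrc0) hd0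
    rw [← mul_assoc, ← mul_assoc] at h2
    have h3 := mul_right_cancel₀ hd0 h2
    exact mul_right_cancel₀ (ne_of_gt hrc0) h3
  -- the image set `T`
  set g : D → EuclideanSpace ℝ (Fin k) := fun z => ((a (c z)) : EuclideanSpace ℝ (Fin k)) with hg
  set T : Set (EuclideanSpace ℝ (Fin k)) := Set.range g with hT
  have hTdim : (k : ℝ≥0∞) - 1 < dimH T := by
    have hanti : AntilipschitzWith ((Real.toNNReal (ra * rc))⁻¹) g := by
      apply AntilipschitzWith.of_le_mul_dist
      intro z1 z2
      have : dist (g z1) (g z2) = (ra * rc) * dist z1 z2 := by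
        have h1 := hra (c z1) (c z2)
        have h2 := hrc z1 z2
        calc dist (g z1) (g z2) = dist (a (c z1)) (a (c z2)) := rfl
        _ = ra * dist (c z1) (c z2) := h1
        _ = ra * (rc * dist z1 z2) := by rw [h2]
        _ = (ra * rc) * dist z1 z2 := by ring
      rw [this]
      have hpos' : 0 < ra * rc := mul_pos hra0 hrc0
      rw [NNReal.coe_inv, Real.coe_toNNReal _ hpos'.le]
      rw [inv_mul_cancel_left₀ (ne_of_gt hpos')]
    have h1 : dimH (Set.univ : Set D) ≤ dimH T := by
      have := hanti.le_dimH_image Set.univ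
      rwa [Set.image_univ, ← hT] at this
    have h2 : dimH D = dimH (Set.univ : Set D) := by
      have := (isometry_subtype_coe (s := D)).dimH_image Set.univ
      rw [Set.image_univ, Subtype.range_coe] at this
      exact this
    calc (k : ℝ≥0∞) - 1 < dimH D := hdim
    _ = dimH (Set.univ : Set D) := h2
    _ ≤ dimH T := h1
  -- conclude
  funext x
  apply Subtype.ext
  apply aux_eq_of_dist_eq hk T hTdim
  rintro q ⟨z, rfl⟩
  have h1 : dist (g z) ((a x : EuclideanSpace ℝ (Fin k))) = ra * dist (c z) x := by
    have := hra (c z) x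
    rwa [Subtype.dist_eq, Subtype.dist_eq] at this
  have h2 : dist (g z) ((b x : EuclideanSpace ℝ (Fin k))) = rb * dist (c z) x := by
    have := hrb (c z) x
    rw [Subtype.dist_eq, Subtype.dist_eq] at this
    rw [hg]
    simp only
    rw [hcc z]
    exact this
  rw [h1, h2, hrab]
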